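/- Let I and F be matchings in a k-uniform hypergraph H with no 3-comb. Then every connected component of the hypergraph I ⊕ F is a path or a cycle in which edges of I alternate with edges of F; in particular, every cycle-component has an even number of edges. -/

import Mathlib

/-- A matching in a hypergraph: a set of pairwise disjoint edges. -/
def IsMatching {V : Type*} [DecidableEq V] (M : Finset (Finset V)) : Prop :=
  ∀ e ∈ M, ∀ f ∈ M, e ≠ f → Disjoint e f

/-- A 3-comb: a matching {e1,e2,e3} together with an edge e4 intersecting each of them. -/
def HasThreeComb {V : Type*} [DecidableEq V] (H : Finset (Finset V)) : Prop :=
  ∃ e1 ∈ H, ∃ e2 ∈ H, ∃ e3 ∈ H, ∃ e4 ∈ H,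
    e1 ≠ e2 ∧ e1 ≠ e3 ∧ e2 ≠ e3 ∧ e4 ≠ e1 ∧ e4 ≠ e2 ∧ e4 ≠ e3 ∧
    Disjoint e1 e2 ∧ Disjoint e1 e3 ∧ Disjoint e2 e3 ∧
    ¬ Disjoint e4 e1 ∧ ¬ Disjoint e4 e2 ∧ ¬ Disjoint e4 e3

/-- Two edges of `D` are connected (lie in the same component) if they are joined by
a chain of pairwise intersecting edges of `D`. -/
def Conn {V : Type*} [DecidableEq V] (D : Finset (Finset V)) (a b : Finset V) : Prop :=
  Relation.ReflTransGen (fun x y => x ∈ D ∧ y ∈ D ∧ (x ∩ y).Nonempty) a b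

/-- A (hypergraph) path, given as a list of edges: consecutive edges intersect and
no other pairs do. -/
def IsPathList {V : Type*} [DecidableEq V] (l : List (Finset V)) : Prop :=
  l ≠ [] ∧ l.Nodup ∧ ∀ i j (hi : i < l.length) (hj : j < l.length), i < j →
    ((l.get ⟨i, hi⟩ ∩ l.get ⟨j, hj⟩).Nonempty ↔ j = i + 1)

/-- A (hypergraph) cycle, given as a list of at least three edges: consecutive edges
intersect, the first and last edges intersect, and no other pairs do. -/
def IsCycleList {V : Type*} [DecidableEq V] (l : List (Finset V)) : Prop :=
  3 ≤ l.length ∧ l.Nodup ∧ ∀ i j (hi : i < l.length) (hj : j < l.length), i < j →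
    ((l.get ⟨i, hi⟩ ∩ l.get ⟨j, hj⟩).Nonempty ↔ (j = i + 1 ∨ (i = 0 ∧ j = l.length - 1)))

/-- Along the list, edges of `I` alternate with edges of `F`. -/
def Alternates {V : Type*} [DecidableEq V] (I F : Finset (Finset V))
    (l : List (Finset V)) : Prop :=
  ∀ i (h : i + 1 < l.length),
    (l.get ⟨i, by omega⟩ ∈ I ∧ l.get ⟨i + 1, h⟩ ∈ F) ∨
    (l.get ⟨i, by omega⟩ ∈ F ∧ l.get ⟨i + 1, h⟩ ∈ I)

private lemma exists_max_chain {V : Type*} [DecidableEq V] (D : Finset (Finset V))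
    (e : Finset V) (he : e ∈ D) :
    ∃ l : List (Finset V), l.Nodup ∧ (∀ x ∈ l, x ∈ D) ∧
      l.Chain' (fun x y => (x ∩ y).Nonempty) ∧ e ∈ l ∧
      (∀ y ∈ D, y ∉ l → ∀ h : l ≠ [],
        ¬(y ∩ l.head h).Nonempty ∧ ¬(l.getLast h ∩ y).Nonempty) := by
  have bound : ∀ l : List (Finset V), l.Nodup → (∀ x ∈ l, x ∈ D) → l.length ≤ D.card := by
    intro l h1 h2
    have hsub : l.toFinset ⊆ D := fun x hx => h2 x (List.mem_toFinset.mp hx)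
    calc l.length = l.toFinset.card := (List.toFinset_card_of_nodup h1).symm
      _ ≤ D.card := Finset.card_le_card hsub
  suffices h : ∀ n (l : List (Finset V)), l.Nodup → (∀ x ∈ l, x ∈ D) →
      l.Chain' (fun x y => (x ∩ y).Nonempty) → e ∈ l → D.card - l.length ≤ n →
      ∃ l' : List (Finset V), l'.Nodup ∧ (∀ x ∈ l', x ∈ D) ∧
        l'.Chain' (fun x y => (x ∩ y).Nonempty) ∧ e ∈ l' ∧
        (∀ y ∈ D, y ∉ l' → ∀ hh : l' ≠ [],
          ¬(y ∩ l'.head hh).Nonempty ∧ ¬(l'.getLast hh ∩ y).Nonempty) by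
    exact h D.card [e] (by simp) (by simpa using he) (List.isChain_singleton _) (by simp) (by omega)
  intro n
  induction n with
  | zero =>
    intro l h1 h2 h3 h4 h5
    refine ⟨l, h1, h2, h3, h4, ?_⟩
    intro y hy hyl hh
    exfalso
    have hle : l.length ≤ D.card := bound l h1 h2
    have hsub : l.toFinset ⊆ D := fun x hx => h2 x (List.mem_toFinset.mp hx)
    have heq : l.toFinset = D := Finset.eq_of_subset_of_card_le hsub
      (by rw [List.toFinset_card_of_nodup h1]; omega)
    exact hyl (List.mem_toFinset.mp (heq ▸ hy))
  | succ n ih =>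
    intro l h1 h2 h3 h4 h5
    have hne : l ≠ [] := by rintro rfl; simp at h4
    by_cases hhead : ∃ y ∈ D, y ∉ l ∧ (y ∩ l.head hne).Nonempty
    · obtain ⟨y, hyD, hyl, hyi⟩ := hhead
      refine ih (y :: l) (by simp [h1, hyl]) ?_ ?_ (by simp [h4]) (by simp; omega)
      · intro x hx
        rcases List.mem_cons.mp hx with rfl | hx
        · exact hyD
        · exact h2 x hx
      · show List.IsChain _ (y :: l); rw [List.isChain_cons]
        refine ⟨?_, h3⟩
        intro z hz
        rw [List.head?_eq_head hne] at hz
        obtain rfl := Option.some_injective _ hz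
        exact hyi
    · by_cases htail : ∃ y ∈ D, y ∉ l ∧ (l.getLast hne ∩ y).Nonempty
      · obtain ⟨y, hyD, hyl, hyi⟩ := htail
        refine ih (l ++ [y]) (by simp [List.nodup_append, h1]; rintro a ha rfl; exact hyl ha) ?_ ?_ (by simp [h4])
          (by simp; omega)
        · intro x hx
          rcases List.mem_append.mp hx with hx | hx
          · exact h2 x hx
          · obtain rfl := List.mem_singleton.mp hx
            exact hyD
        · refine List.IsChain.append h3 (by simp) ?_
          intro a ha b hb
          rw [List.getLast?_eq_getLast hne] at ha
          obtain rfl := Option.some_injective _ ha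
          obtain rfl := Option.some_injective _ (by simpa using hb)
          exact hyi
      · push_neg at hhead htail
        refine ⟨l, h1, h2, h3, h4, ?_⟩
        intro y hy hyl hh
        exact ⟨Finset.not_nonempty_iff_eq_empty.mpr (hhead y hy hyl),
          Finset.not_nonempty_iff_eq_empty.mpr (htail y hy hyl)⟩

private lemma exists_good_list {V : Type*} [DecidableEq V] (D : Finset (Finset V))
    (hdeg : ∀ x ∈ D, ∀ y1 ∈ D, ∀ y2 ∈ D, ∀ y3 ∈ D,
      y1 ≠ x → y2 ≠ x → y3 ≠ x → y1 ≠ y2 → y1 ≠ y3 → y2 ≠ y3 →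
      (x ∩ y1).Nonempty → (x ∩ y2).Nonempty → (x ∩ y3).Nonempty → False)
    (e : Finset V) (he : e ∈ D) :
    ∃ l : List (Finset V), (IsPathList l ∨ IsCycleList l) ∧
      (∀ f, f ∈ l ↔ (f ∈ D ∧ Conn D e f)) := by
  obtain ⟨l, hnd, hmem, hch, hel, hmax⟩ := exists_max_chain D e he
  have hne : l ≠ [] := by rintro rfl; simp at hel
  have hlpos : 0 < l.length := List.length_pos_iff.mpr hne
  have hget : ∀ i (h : i + 1 < l.length),
      (l.get ⟨i, by omega⟩ ∩ l.get ⟨i + 1, h⟩).Nonempty := by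
    intro i h
    exact List.isChain_iff_getElem.mp hch i (by omega)
  have hneq : ∀ i j (hi : i < l.length) (hj : j < l.length), i ≠ j →
      l.get ⟨i, hi⟩ ≠ l.get ⟨j, hj⟩ := by
    intro i j hi hj hij heq
    exact hij (Fin.mk_eq_mk.mp ((List.Nodup.get_inj_iff hnd).mp heq))
  have hgeq : ∀ i j (hi : i < l.length) (hj : j < l.length), i = j →
      l.get ⟨i, hi⟩ = l.get ⟨j, hj⟩ := by
    rintro i j hi hj rfl; rfl
  have hadj : ∀ i j (hi : i < l.length) (hj : j < l.length), (j = i + 1 ∨ i = j + 1) →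
      (l.get ⟨i, hi⟩ ∩ l.get ⟨j, hj⟩).Nonempty := by
    rintro i j hi hj (rfl | rfl)
    · exact hget i hj
    · rw [Finset.inter_comm]; exact hget j hi
  have hD : ∀ i (hi : i < l.length), l.get ⟨i, hi⟩ ∈ D :=
    fun i hi => hmem _ (List.get_mem l ⟨i, hi⟩)
  have hhead : l.head hne = l.get ⟨0, hlpos⟩ := by rw [List.head_eq_getElem]; rfl
  have hlast : l.getLast hne = l.get ⟨l.length - 1, by omega⟩ := by rw [List.getLast_eq_getElem]; rfl
  -- classification of intersecting pairs
  have hB : ∀ i j (hi : i < l.length) (hj : j < l.length), i < j →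
      (l.get ⟨i, hi⟩ ∩ l.get ⟨j, hj⟩).Nonempty →
      j = i + 1 ∨ (i = 0 ∧ j = l.length - 1) := by
    intro i j hi hj hij hint
    by_contra hcon
    push_neg at hcon
    obtain ⟨hj1, hcon2⟩ := hcon
    rcases Nat.eq_zero_or_pos i with rfl | hipos
    · -- i = 0, j ≠ 1, j ≠ len-1 ; use interior vertex j
      have hjlast : j ≠ l.length - 1 := fun h => hcon2 rfl h
      have h1 : 0 < j := hij
      have h2 : j + 1 < l.length := by omega
      refine hdeg (l.get ⟨j, hj⟩) (hD j hj)
        (l.get ⟨j - 1, by omega⟩) (hD _ _) (l.get ⟨j + 1, h2⟩) (hD _ _)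
        (l.get ⟨0, hi⟩) (hD _ _)
        (hneq _ _ _ _ (by omega)) (hneq _ _ _ _ (by omega)) (hneq _ _ _ _ (by omega))
        (hneq _ _ _ _ (by omega)) (hneq _ _ _ _ (by omega)) (hneq _ _ _ _ (by omega))
        (hadj _ _ _ _ (by omega)) (hadj _ _ _ _ (by omega)) ?_
      rw [Finset.inter_comm]; exact hint
    · -- 0 < i, interior vertex i
      have h2 : i + 1 < l.length := by omega
      refine hdeg (l.get ⟨i, hi⟩) (hD i hi)
        (l.get ⟨i - 1, by omega⟩) (hD _ _) (l.get ⟨i + 1, h2⟩) (hD _ _)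
        (l.get ⟨j, hj⟩) (hD _ _)
        (hneq _ _ _ _ (by omega)) (hneq _ _ _ _ (by omega)) (hneq _ _ _ _ (by omega))
        (hneq _ _ _ _ (by omega)) (hneq _ _ _ _ (by omega)) (hneq _ _ _ _ (by omega))
        (hadj _ _ _ _ (by omega)) (hadj _ _ _ _ (by omega)) hint
  -- closure under adjacency
  have hclose : ∀ x ∈ l, ∀ y ∈ D, (x ∩ y).Nonempty → y ∈ l := by
    intro x hx y hyD hint
    by_contra hyl
    obtain ⟨⟨i, hi⟩, rfl⟩ := List.mem_iff_get.mp hx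
    have hymax := hmax y hyD hyl hne
    rcases Nat.eq_zero_or_pos i with rfl | hipos
    · exact hymax.1 (by rw [hhead, Finset.inter_comm]
                        exact hint)
    · rcases eq_or_ne i (l.length - 1) with rfl | hilast
      · exact hymax.2 (by rw [hlast]; exact hint)
      · have h2 : i + 1 < l.length := by omega
        have hyne : ∀ j (hjl : j < l.length), y ≠ l.get ⟨j, hjl⟩ := by
          intro j hjl h; exact hyl (h ▸ List.get_mem l ⟨j, hjl⟩)
        exact hdeg (l.get ⟨i, hi⟩) (hD i hi)
          (l.get ⟨i - 1, by omega⟩) (hD _ _) (l.get ⟨i + 1, h2⟩) (hD _ _) y hyD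
          (hneq _ _ _ _ (by omega)) (hneq _ _ _ _ (by omega)) (hyne i hi)
          (hneq _ _ _ _ (by omega)) (Ne.symm (hyne _ _)) (Ne.symm (hyne _ _))
          (hadj _ _ _ _ (by omega)) (hadj _ _ _ _ (by omega)) hint
  -- connectivity along the list
  have hsymm : ∀ a b : Finset V, Conn D a b → Conn D b a := by
    intro a b h
    haveI : Std.Symm (fun x y : Finset V => x ∈ D ∧ y ∈ D ∧ (x ∩ y).Nonempty) :=
      ⟨fun x y ⟨h1, h2, h3⟩ => ⟨h2, h1, by rwa [Finset.inter_comm] at h3⟩⟩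
    exact Std.Symm.symm (r := Relation.ReflTransGen _) a b h
  have mono : ∀ j (hj : j < l.length) i (hi : i < l.length), i ≤ j →
      Conn D (l.get ⟨i, hi⟩) (l.get ⟨j, hj⟩) := by
    intro j
    induction j with
    | zero =>
      intro hj i hi hle
      obtain rfl : i = 0 := by omega
      exact Relation.ReflTransGen.refl
    | succ n ihn =>
      intro hj i hi hle
      rcases Nat.lt_or_ge i (n + 1) with h | h
      · exact Relation.ReflTransGen.tail (ihn (by omega) i hi (by omega))
          ⟨hD n (by omega), hD (n + 1) hj, hget n hj⟩
      · obtain rfl : i = n + 1 := by omega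
        exact Relation.ReflTransGen.refl
  have hconn : ∀ f ∈ l, Conn D e f := by
    intro f hf
    obtain ⟨⟨p, hp⟩, rfl⟩ := List.mem_iff_get.mp hf
    obtain ⟨⟨q, hq⟩, hq'⟩ := List.mem_iff_get.mp hel
    rw [← hq']
    rcases le_or_gt q p with h | h
    · exact mono p hp q hq h
    · exact hsymm _ _ (mono q hq p hp (by omega))
  have hiff : ∀ f, f ∈ l ↔ (f ∈ D ∧ Conn D e f) := by
    intro f
    constructor
    · intro hf; exact ⟨hmem f hf, hconn f hf⟩
    · rintro ⟨hfD, hc⟩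
      clear hfD
      induction hc with
      | refl => exact hel
      | tail h1 h2 ih => exact hclose _ ih _ h2.2.1 h2.2.2
  by_cases hcyc : 3 ≤ l.length ∧ (l.get ⟨0, hlpos⟩ ∩ l.get ⟨l.length - 1, by omega⟩).Nonempty
  · refine ⟨l, Or.inr ⟨hcyc.1, hnd, ?_⟩, hiff⟩
    intro i j hi hj hij
    constructor
    · exact hB i j hi hj hij
    · rintro (rfl | ⟨rfl, rfl⟩)
      · exact hget i hj
      · exact hcyc.2
  · refine ⟨l, Or.inl ⟨hne, hnd, ?_⟩, hiff⟩
    intro i j hi hj hij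
    constructor
    · intro hint
      rcases hB i j hi hj hij hint with h | ⟨rfl, rfl⟩
      · exact h
      · rcases eq_or_ne (l.length - 1) 1 with h | h
        · omega
        · exact absurd ⟨by omega, hint⟩ hcyc
    · rintro rfl
      exact hget i hj

/-- If `I` and `F` are matchings in a `k`-uniform hypergraph `H` with no 3-comb, then
every connected component of `I ⊕ F` is a path or a cycle in which edges of `I`
alternate with edges of `F`; in particular every cycle-component has an even
number of edges. -/
theorem components_of_symmDiff_are_paths_or_cycles {V : Type*} [DecidableEq V] (k : ℕ)
    (H I F : Finset (Finset V)) (hk : ∀ e ∈ H, e.card = k)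
    (hcomb : ¬ HasThreeComb H)
    (hI : I ⊆ H) (hIm : IsMatching I) (hF : F ⊆ H) (hFm : IsMatching F) :
    ∀ e ∈ symmDiff I F, ∃ l : List (Finset V),
      (IsPathList l ∨ (IsCycleList l ∧ Even l.length)) ∧
      Alternates I F l ∧
      (∀ f : Finset V, f ∈ l ↔ (f ∈ symmDiff I F ∧ Conn (symmDiff I F) e f)) := by
  intro e he
  set D := symmDiff I F with hDdef
  have hside : ∀ x ∈ D, ∀ y ∈ D, x ≠ y → (x ∩ y).Nonempty →
      (x ∈ I ∧ x ∉ F ∧ y ∈ F ∧ y ∉ I) ∨ (x ∈ F ∧ x ∉ I ∧ y ∈ I ∧ y ∉ F) := by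
    intro x hx y hy hxy hint
    rw [hDdef, Finset.mem_symmDiff] at hx hy
    have hndis : ¬ Disjoint x y := Finset.not_disjoint_iff_nonempty_inter.mpr hint
    rcases hx with ⟨hxI, hxF⟩ | ⟨hxF, hxI⟩ <;> rcases hy with ⟨hyI, hyF⟩ | ⟨hyF, hyI⟩
    · exact absurd (hIm x hxI y hyI hxy) hndis
    · exact Or.inl ⟨hxI, hxF, hyF, hyI⟩
    · exact Or.inr ⟨hxF, hxI, hyI, hyF⟩
    · exact absurd (hFm x hxF y hyF hxy) hndis
  have hdeg : ∀ x ∈ D, ∀ y1 ∈ D, ∀ y2 ∈ D, ∀ y3 ∈ D,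
      y1 ≠ x → y2 ≠ x → y3 ≠ x → y1 ≠ y2 → y1 ≠ y3 → y2 ≠ y3 →
      (x ∩ y1).Nonempty → (x ∩ y2).Nonempty → (x ∩ y3).Nonempty → False := by
    intro x hx y1 hy1 y2 hy2 y3 hy3 n1 n2 n3 n12 n13 n23 i1 i2 i3
    apply hcomb
    rcases hside x hx y1 hy1 n1.symm i1 with ⟨hxI, hxF, h1F, h1I⟩ | ⟨hxF, hxI, h1I, h1F⟩
    · have h2F : y2 ∈ F := by
        rcases hside x hx y2 hy2 n2.symm i2 with ⟨_, _, h, _⟩ | ⟨_, h, _, _⟩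
        · exact h
        · exact absurd hxI h
      have h3F : y3 ∈ F := by
        rcases hside x hx y3 hy3 n3.symm i3 with ⟨_, _, h, _⟩ | ⟨_, h, _, _⟩
        · exact h
        · exact absurd hxI h
      exact ⟨y1, hF h1F, y2, hF h2F, y3, hF h3F, x, hI hxI, n12, n13, n23,
        n1.symm, n2.symm, n3.symm,
        hFm y1 h1F y2 h2F n12, hFm y1 h1F y3 h3F n13, hFm y2 h2F y3 h3F n23,
        Finset.not_disjoint_iff_nonempty_inter.mpr i1,
        Finset.not_disjoint_iff_nonempty_inter.mpr i2,
        Finset.not_disjoint_iff_nonempty_inter.mpr i3⟩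
    · have h2I : y2 ∈ I := by
        rcases hside x hx y2 hy2 n2.symm i2 with ⟨_, h, _, _⟩ | ⟨_, _, h, _⟩
        · exact absurd hxF h
        · exact h
      have h3I : y3 ∈ I := by
        rcases hside x hx y3 hy3 n3.symm i3 with ⟨_, h, _, _⟩ | ⟨_, _, h, _⟩
        · exact absurd hxF h
        · exact h
      exact ⟨y1, hI h1I, y2, hI h2I, y3, hI h3I, x, hF hxF, n12, n13, n23,
        n1.symm, n2.symm, n3.symm,
        hIm y1 h1I y2 h2I n12, hIm y1 h1I y3 h3I n13, hIm y2 h2I y3 h3I n23,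
        Finset.not_disjoint_iff_nonempty_inter.mpr i1,
        Finset.not_disjoint_iff_nonempty_inter.mpr i2,
        Finset.not_disjoint_iff_nonempty_inter.mpr i3⟩
  obtain ⟨l, hpc, hiff⟩ := exists_good_list D hdeg e he
  have hmemD : ∀ x ∈ l, x ∈ D := fun x hx => ((hiff x).mp hx).1
  have hnd : l.Nodup := by rcases hpc with ⟨_, h, _⟩ | ⟨_, h, _⟩ <;> exact h
  have hcons : ∀ i (h : i + 1 < l.length),
      (l.get ⟨i, by omega⟩ ∩ l.get ⟨i + 1, h⟩).Nonempty := by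
    intro i h
    rcases hpc with ⟨_, _, hp⟩ | ⟨_, _, hp⟩
    · exact (hp i (i + 1) (by omega) h (by omega)).mpr rfl
    · exact (hp i (i + 1) (by omega) h (by omega)).mpr (Or.inl rfl)
  have hneq : ∀ i j (hi : i < l.length) (hj : j < l.length), i ≠ j →
      l.get ⟨i, hi⟩ ≠ l.get ⟨j, hj⟩ := by
    intro i j hi hj hij heq
    exact hij (Fin.mk_eq_mk.mp ((List.Nodup.get_inj_iff hnd).mp heq))
  have hD' : ∀ i (hi : i < l.length), l.get ⟨i, hi⟩ ∈ D :=
    fun i hi => hmemD _ (List.get_mem l ⟨i, hi⟩)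
  have halt : Alternates I F l := by
    intro i h
    rcases hside _ (hD' i (by omega)) _ (hD' (i + 1) h) (hneq _ _ _ _ (by omega)) (hcons i h)
      with ⟨h1, _, h2, _⟩ | ⟨h1, _, h2, _⟩
    · exact Or.inl ⟨h1, h2⟩
    · exact Or.inr ⟨h1, h2⟩
  refine ⟨l, ?_, halt, hiff⟩
  rcases hpc with hp | hc
  · exact Or.inl hp
  · refine Or.inr ⟨hc, ?_⟩
    obtain ⟨h3, _, hcy⟩ := hc
    have hlpos : 0 < l.length := by omega
    have hpar : ∀ i (hi : i < l.length),
        (l.get ⟨i, hi⟩ ∈ I ↔ (Even i ↔ l.get ⟨0, hlpos⟩ ∈ I)) := by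
      intro i
      induction i with
      | zero => intro hi; simp
      | succ n ihn =>
        intro hi
        have hn := ihn (by omega)
        have hea : Even (n + 1) ↔ ¬ Even n := Nat.even_add_one
        rcases hside _ (hD' n (by omega)) _ (hD' (n + 1) hi) (hneq _ _ _ _ (by omega))
          (hcons n hi) with ⟨h1, h2, h3', h4⟩ | ⟨h1, h2, h3', h4⟩ <;> tauto
    have hN := hpar (l.length - 1) (by omega)
    have h0 := hpar 0 hlpos
    have hends := hside _ (hD' 0 hlpos) _ (hD' (l.length - 1) (by omega))
      (hneq _ _ _ _ (by omega))
      ((hcy 0 (l.length - 1) hlpos (by omega) (by omega)).mpr (Or.inr ⟨rfl, rfl⟩))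
    have hodd : ¬ Even (l.length - 1) := by
      rcases hends with ⟨h1, h2, h3', h4⟩ | ⟨h1, h2, h3', h4⟩ <;> tauto
    have hlen : l.length - 1 + 1 = l.length := by omega
    rw [← hlen, Nat.even_add_one]
    exact hodd
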